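/- Let X be a nonempty compact Hausdorff totally disconnected topological space and let μ be a regular Borel probability measure on X. Then μ lies in the weak-* closure of the set of measures of the form (1/n)·(δ_{p₁} + … + δ_{pₙ}), where n ≥ 1 and p₁, …, pₙ are points of supp(μ) (uniform averages of Dirac measures at points of the support of μ). -/

import Mathlib

open MeasureTheory
open scoped NNReal

/-- The support of a measure: points all of whose open neighborhoods have
positive measure. -/
def measSupport {X : Type*} [TopologicalSpace X] [MeasurableSpace X]
    (μ : Measure X) : Set X :=
  {a : X | ∀ U : Set X, IsOpen U → a ∈ U → 0 < μ U}

open Set Filter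
open scoped ENNReal BoundedContinuousFunction Topology

set_option linter.unusedSectionVars false
set_option maxHeartbeats 1000000

lemma flat_sum {M : Type*} [AddCommMonoid M] {m : ℕ} (n : Fin m → ℕ) (g : Fin m → M) :
    (((List.finRange m).flatMap fun i => List.replicate (n i) (g i)).sum)
      = ∑ i, n i • g i := by
  rw [List.flatMap, List.sum_flatten, List.map_map, ← List.ofFn_eq_map, List.sum_ofFn]
  simp [List.sum_replicate]

lemma flat_len {X : Type*} {m : ℕ} (n : Fin m → ℕ) (q : Fin m → X) :
    (((List.finRange m).flatMap fun i => List.replicate (n i) (q i)).length)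
      = ∑ i, n i := by
  simp only [List.length_flatMap, Function.comp_def, List.length_replicate]
  rw [← List.ofFn_eq_map, List.sum_ofFn]

lemma fin_sum_list {X : Type*} {M : Type*} [AddCommMonoid M] {m : ℕ} (n : Fin m → ℕ)
    (q : Fin m → X) (F : X → M) {N : ℕ}
    (h : N = (((List.finRange m).flatMap fun i => List.replicate (n i) (q i)).length)) :
    ∑ k : Fin N,
      F ((((List.finRange m).flatMap fun i => List.replicate (n i) (q i)).get (Fin.cast h k)))
      = ∑ i, n i • F (q i) := by
  set L := ((List.finRange m).flatMap fun i => List.replicate (n i) (q i)) with hL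
  have h1 : ∑ k : Fin N, F (L.get (Fin.cast h k)) = ∑ j : Fin L.length, F (L.get j) :=
    Equiv.sum_comp (finCongr h) (fun j => F (L.get j))
  rw [h1]
  have h2 : ∑ j : Fin L.length, F (L.get j) = (L.map F).sum := by
    rw [← List.sum_ofFn]
    congr 1
    exact List.ofFn_getElem_eq_map _ _
  rw [h2, hL, List.map_flatMap]
  simp only [List.map_replicate]
  exact flat_sum n (fun i => F (q i))

section Helpers

variable {X : Type*} [TopologicalSpace X] [CompactSpace X] [T2Space X]
    [TotallyDisconnectedSpace X] [MeasurableSpace X] [BorelSpace X]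

lemma exists_mem_measSupport (μ : Measure X) {U : Set X} (hU : IsClopen U)
    (hpos : μ U ≠ 0) : ∃ q, q ∈ U ∧ q ∈ measSupport μ := by
  by_contra h
  simp only [measSupport, Set.mem_setOf_eq] at h
  push_neg at h
  have hc : ∀ q : U, ∃ W : Set X, IsOpen W ∧ (q : X) ∈ W ∧ μ W = 0 := by
    rintro ⟨q, hq⟩
    obtain ⟨W, hWo, hqW, hWμ⟩ := h q hq
    exact ⟨W, hWo, hqW, le_antisymm hWμ zero_le⟩
  choose W hWo hqW hWμ using hc
  have hUcomp : IsCompact U := hU.isClosed.isCompact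
  obtain ⟨t, ht⟩ := hUcomp.elim_finite_subcover W hWo
    (fun x hx => Set.mem_iUnion.2 ⟨⟨x, hx⟩, hqW ⟨x, hx⟩⟩)
  apply hpos
  refine le_antisymm ?_ zero_le
  calc μ U ≤ μ (⋃ q ∈ t, W q) := measure_mono ht
    _ = 0 := (measure_biUnion_null_iff t.countable_toSet).2 fun q _ => hWμ q

lemma exists_clopen_partition(s : Finset (X →ᵇ ℝ)) {δ : ℝ} (hδ : 0 < δ) :
    ∃ (m : ℕ) (A : Fin m → Set X), (∀ i, IsClopen (A i)) ∧
      Pairwise (Function.onFun Disjoint A) ∧ (⋃ i, A i) = Set.univ ∧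
      ∀ i, ∀ f ∈ s, ∀ x ∈ A i, ∀ y ∈ A i, |f x - f y| ≤ δ := by
  have hW : ∀ x : X, ∃ V : Set X, IsClopen V ∧ x ∈ V ∧
      ∀ f ∈ s, ∀ y ∈ V, |f y - f x| ≤ δ / 2 := by
    intro x
    have hWo : IsOpen (⋂ f ∈ s, (f : X → ℝ) ⁻¹' Metric.ball (f x) (δ / 2)) :=
      isOpen_biInter_finset fun f _ => (map_continuous f).isOpen_preimage _ Metric.isOpen_ball
    have hxW : x ∈ ⋂ f ∈ s, (f : X → ℝ) ⁻¹' Metric.ball (f x) (δ / 2) := by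
      simp only [mem_iInter, mem_preimage, Metric.mem_ball, dist_self]
      exact fun f _ => by linarith
    obtain ⟨V, hVc, hxV, hVW⟩ :=
      isTopologicalBasis_isClopen.exists_subset_of_mem_open hxW hWo
    refine ⟨V, hVc, hxV, fun f hf y hy => ?_⟩
    have := hVW hy
    simp only [mem_iInter, mem_preimage, Metric.mem_ball] at this
    have := this f hf
    rw [Real.dist_eq] at this
    linarith
  choose V hVc hxV hVosc using hW
  obtain ⟨t, ht⟩ := isCompact_univ.elim_finite_subcover V (fun x => (hVc x).2)
    (fun x _ => mem_iUnion.2 ⟨x, hxV x⟩)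
  set m := t.card with hm
  set e : Fin m → X := fun i => (t.equivFin.symm i : X) with he
  set g : ℕ → Set X := fun k => if h : k < m then V (e ⟨k, h⟩) else ∅ with hg
  have hgc : ∀ k, IsClopen (g k) := by
    intro k
    rw [hg]
    dsimp only
    split_ifs
    · exact hVc _
    · exact isClopen_empty
  have hgcover : ⋃ k, g k = univ := by
    refine eq_univ_of_forall fun x => ?_
    obtain ⟨y, hyt, hxy⟩ := mem_iUnion₂.1 (ht (mem_univ x))
    refine mem_iUnion.2 ⟨(t.equivFin ⟨y, hyt⟩ : ℕ), ?_⟩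
    have hlt : ((t.equivFin ⟨y, hyt⟩ : ℕ)) < m := (t.equivFin ⟨y, hyt⟩).2
    rw [hg]
    dsimp only
    rw [dif_pos hlt]
    have : e ⟨(t.equivFin ⟨y, hyt⟩ : ℕ), hlt⟩ = y := by
      rw [he]
      simp
    rwa [this]
  -- partial sups are clopen
  have hps : ∀ k, IsClopen (partialSups g k) := by
    intro k
    induction k with
    | zero => simpa using hgc 0
    | succ k ih =>
        rw [partialSups_add_one]
        exact ih.union (hgc (k + 1))
  have hdc : ∀ k, IsClopen (disjointed g k) := by
    intro k
    cases k with
    | zero => simpa [disjointed_zero] using hgc 0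
    | succ k =>
        rw [disjointed_add_one]
        exact (hgc (k + 1)).diff (hps k)
  refine ⟨m, fun i => disjointed g i, fun i => hdc i, ?_, ?_, ?_⟩
  · intro i j hij
    exact disjoint_disjointed g (fun h => hij (Fin.ext h))
  · apply subset_antisymm (subset_univ _)
    rw [← hgcover, ← iUnion_disjointed]
    intro x hx
    obtain ⟨k, hk⟩ := mem_iUnion.1 hx
    have hkm : k < m := by
      by_contra hkm
      have : disjointed g k ⊆ g k := disjointed_subset g k
      have hempty : g k = ∅ := by rw [hg]; exact dif_neg hkm
      rw [hempty] at this
      exact this hk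
    exact mem_iUnion.2 ⟨⟨k, hkm⟩, hk⟩
  · intro i f hf x hx y hy
    have hsub : disjointed g (i : ℕ) ⊆ V (e i) := by
      have h1 : disjointed g (i : ℕ) ⊆ g (i : ℕ) := disjointed_subset g i
      have h2 : g (i : ℕ) = V (e i) := by
        rw [hg]; dsimp only; rw [dif_pos i.2]
      rw [h2] at h1; exact h1
    have h1 := hVosc (e i) f hf x (hsub hx)
    have h2 := hVosc (e i) f hf y (hsub hy)
    rw [abs_sub_le_iff] at h1 h2 ⊢
    constructor <;> linarith [h1.1, h1.2, h2.1, h2.2]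

lemma exists_nat_weights{m : ℕ} (w : Fin m → ℝ) (hw0 : ∀ i, 0 ≤ w i)
    (hw1 : ∑ i, w i = 1) {N : ℕ} (hN : 0 < N) :
    ∃ n : Fin m → ℕ, (∑ i, n i = N) ∧ (∀ i, n i ≠ 0 → w i ≠ 0) ∧
      ∑ i, |(n i : ℝ) / N - w i| ≤ 2 * m / N := by
  have hNR : (0 : ℝ) < N := by exact_mod_cast hN
  obtain ⟨i₀, -, hi₀⟩ : ∃ i ∈ Finset.univ, w i ≠ 0 :=
    Finset.exists_ne_zero_of_sum_ne_zero (by rw [hw1]; exact one_ne_zero)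
  classical
  set n' : Fin m → ℕ := fun i => ⌊(N : ℝ) * w i⌋₊ with hn'
  have key1 : ∀ i, (n' i : ℝ) ≤ N * w i := fun i =>
    Nat.floor_le (mul_nonneg hNR.le (hw0 i))
  have key2 : ∀ i, (N : ℝ) * w i < n' i + 1 := fun i => Nat.lt_floor_add_one _
  set R : ℕ := ∑ j ∈ Finset.univ.erase i₀, n' j with hR
  have hRle : (R : ℝ) ≤ N := by
    rw [hR]
    push_cast
    calc ∑ j ∈ Finset.univ.erase i₀, (n' j : ℝ)
        ≤ ∑ j ∈ Finset.univ.erase i₀, (N : ℝ) * w j :=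
          Finset.sum_le_sum fun j _ => key1 j
      _ = N * ∑ j ∈ Finset.univ.erase i₀, w j := by rw [Finset.mul_sum]
      _ ≤ N * 1 := by
          refine mul_le_mul_of_nonneg_left ?_ hNR.le
          have := Finset.sum_erase_add Finset.univ w (Finset.mem_univ i₀)
          have h0 := hw0 i₀
          rw [hw1] at this
          linarith
      _ = N := mul_one _
  have hRleN : R ≤ N := by exact_mod_cast hRle
  set n : Fin m → ℕ := fun i => if i = i₀ then N - R else n' i with hn
  have hni₀ : n i₀ = N - R := by rw [hn]; simp
  have hnne : ∀ i, i ≠ i₀ → n i = n' i := by intro i hi; rw [hn]; simp [hi]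
  have hsum : ∑ i, n i = N := by
    rw [← Finset.sum_erase_add Finset.univ n (Finset.mem_univ i₀), hni₀]
    have : ∑ j ∈ Finset.univ.erase i₀, n j = R := by
      rw [hR]; exact Finset.sum_congr rfl fun j hj => hnne j (Finset.ne_of_mem_erase hj)
    rw [this]
    omega
  have hcastni₀ : (n i₀ : ℝ) = N - R := by rw [hni₀]; push_cast [hRleN]; ring
  -- per-term bounds off i₀
  have hterm : ∀ j, j ≠ i₀ → 0 ≤ w j - (n j : ℝ) / N ∧ w j - (n j : ℝ) / N ≤ 1 / N := by
    intro j hj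
    rw [hnne j hj]
    constructor
    · rw [sub_nonneg, div_le_iff₀ hNR]
      linarith [key1 j]
    · rw [sub_le_iff_le_add, ← add_div, le_div_iff₀ hNR]
      linarith [key2 j]
  refine ⟨n, hsum, ?_, ?_⟩
  · intro i hi
    rcases eq_or_ne i i₀ with rfl | h
    · exact hi₀
    · rw [hnne i h] at hi
      intro hwi
      apply hi
      rw [hn']
      simp [hwi]
  · -- sum of errors
    have hwsplit : w i₀ = 1 - ∑ j ∈ Finset.univ.erase i₀, w j := by
      have := Finset.sum_erase_add Finset.univ w (Finset.mem_univ i₀)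
      rw [hw1] at this
      linarith
    have hRsplit : (n i₀ : ℝ) / N - w i₀ = ∑ j ∈ Finset.univ.erase i₀, (w j - (n j : ℝ) / N) := by
      rw [hcastni₀, hwsplit]
      rw [Finset.sum_sub_distrib]
      have : ∑ j ∈ Finset.univ.erase i₀, (n j : ℝ) / N = (R : ℝ) / N := by
        rw [hR]
        push_cast
        rw [Finset.sum_div]
        exact Finset.sum_congr rfl fun j hj => by rw [hnne j (Finset.ne_of_mem_erase hj)]
      rw [this]
      field_simp
      ring
    have hcard : ((Finset.univ.erase i₀).card : ℝ) ≤ m := by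
      have := Finset.card_erase_le (a := i₀) (s := (Finset.univ : Finset (Fin m)))
      have h2 : (Finset.univ : Finset (Fin m)).card = m := Finset.card_univ.trans (Fintype.card_fin m)
      exact_mod_cast this.trans_eq h2
    have hi₀bound : |(n i₀ : ℝ) / N - w i₀| ≤ m / N := by
      rw [hRsplit]
      calc |∑ j ∈ Finset.univ.erase i₀, (w j - (n j : ℝ) / N)|
          ≤ ∑ j ∈ Finset.univ.erase i₀, |w j - (n j : ℝ) / N| := Finset.abs_sum_le_sum_abs _ _
        _ ≤ ∑ j ∈ Finset.univ.erase i₀, (1 / N : ℝ) := Finset.sum_le_sum fun j hj => by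
            have h := hterm j (Finset.ne_of_mem_erase hj)
            rw [abs_of_nonneg h.1]; exact h.2
        _ = (Finset.univ.erase i₀).card * (1 / N) := by rw [Finset.sum_const, nsmul_eq_mul]
        _ ≤ m * (1 / N) := by
            apply mul_le_mul_of_nonneg_right hcard
            positivity
        _ = m / N := by ring
    calc ∑ i, |(n i : ℝ) / N - w i|
        = |(n i₀ : ℝ) / N - w i₀| + ∑ j ∈ Finset.univ.erase i₀, |(n j : ℝ) / N - w j| := by
          rw [add_comm, Finset.sum_erase_add Finset.univ _ (Finset.mem_univ i₀)]
      _ ≤ m / N + ∑ j ∈ Finset.univ.erase i₀, (1 / N : ℝ) := by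
          refine add_le_add hi₀bound (Finset.sum_le_sum fun j hj => ?_)
          have h := hterm j (Finset.ne_of_mem_erase hj)
          rw [abs_sub_comm, abs_of_nonneg h.1]
          exact h.2
      _ ≤ m / N + m * (1 / N) := by
          refine add_le_add_right ?_ _
          rw [Finset.sum_const, nsmul_eq_mul]
          apply mul_le_mul_of_nonneg_right hcard
          positivity
      _ = 2 * m / N := by ring

lemma key_lemma(μ : ProbabilityMeasure X) (s : Finset (X →ᵇ ℝ)) {ε : ℝ} (hε : 0 < ε) :
    ∃ ν : ProbabilityMeasure X,
      (∃ n : ℕ, ∃ p : Fin (n + 1) → X,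
        (∀ i, p i ∈ measSupport (μ : Measure X)) ∧
        (ν : Measure X) = ((n + 1 : ℝ≥0))⁻¹ • ∑ i, Measure.dirac (p i)) ∧
      ∀ f ∈ s, |∫ x, f x ∂(ν : Measure X) - ∫ x, f x ∂(μ : Measure X)| < ε := by
  classical
  set B : ℝ := 1 + ∑ f ∈ s, ‖f‖ with hB
  have hsum_nonneg : (0 : ℝ) ≤ ∑ f ∈ s, ‖f‖ := Finset.sum_nonneg fun f _ => norm_nonneg f
  have hBpos : 0 < B := by rw [hB]; linarith
  have hB1 : ∀ f ∈ s, ‖f‖ ≤ B := fun f hf => by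
    have h1 : ‖f‖ ≤ ∑ g ∈ s, ‖g‖ := Finset.single_le_sum (fun g _ => norm_nonneg g) hf
    rw [hB]; linarith
  obtain ⟨m, A, hAc, hAd, hAcover, hosc⟩ := exists_clopen_partition s (δ := ε / 4) (by linarith)
  have hmeasA : ∀ i, MeasurableSet (A i) := fun i => (hAc i).2.measurableSet
  set w : Fin m → ℝ := fun i => ((μ : Measure X) (A i)).toReal with hw
  have hw0 : ∀ i, 0 ≤ w i := fun i => ENNReal.toReal_nonneg
  have hfin : ∀ i, (μ : Measure X) (A i) ≠ ⊤ := fun i => measure_ne_top _ _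
  have hw1 : ∑ i, w i = 1 := by
    have h1 : ∑ i, (μ : Measure X) (A i) = 1 := by
      rw [← tsum_fintype (L := .unconditional _), ← measure_iUnion hAd hmeasA, hAcover, measure_univ]
    rw [hw]
    dsimp only
    rw [← ENNReal.toReal_sum (fun i _ => hfin i), h1, ENNReal.toReal_one]
  -- choose N
  obtain ⟨N, hNgt⟩ := exists_nat_gt (max 1 (4 * m * B / ε))
  have hN1 : (1 : ℝ) < N := lt_of_le_of_lt (le_max_left _ _) hNgt
  have hNR : (0 : ℝ) < N := by linarith
  have hN0 : 0 < N := by exact_mod_cast hNR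
  have hNbound : B * (2 * m / N) < ε / 2 := by
    have h1 : 4 * m * B / ε < N := lt_of_le_of_lt (le_max_right _ _) hNgt
    rw [div_lt_iff₀ hε] at h1
    have h2 : B * (2 * (m : ℝ) / N) = 2 * m * B / N := by ring
    rw [h2, div_lt_iff₀ hNR]
    nlinarith
  obtain ⟨n, hnsum, hnsupp, hnerr⟩ := exists_nat_weights w hw0 hw1 hN0
  -- choose points
  have hqex : ∀ i : Fin m, ∃ x, x ∈ measSupport (μ : Measure X) ∧
      ((μ : Measure X) (A i) ≠ 0 → x ∈ A i) := by
    intro i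
    by_cases hz : (μ : Measure X) (A i) = 0
    · obtain ⟨q, _, hqs⟩ := exists_mem_measSupport (μ : Measure X) isClopen_univ
        (by simp [measure_univ])
      exact ⟨q, hqs, fun h => absurd hz h⟩
    · obtain ⟨q, hq, hqs⟩ := exists_mem_measSupport (μ : Measure X) (hAc i) hz
      exact ⟨q, hqs, fun _ => hq⟩
  choose q hqsupp hqmem using hqex
  set L : List X := (List.finRange m).flatMap fun i => List.replicate (n i) (q i) with hLdef
  have hLlen : L.length = N := by rw [hLdef, flat_len, hnsum]
  set n₀ : ℕ := N - 1 with hn₀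
  have hn₀N : n₀ + 1 = N := by omega
  have hcast : n₀ + 1 = L.length := by rw [hLlen, hn₀N]
  set p : Fin (n₀ + 1) → X := fun k => L.get (Fin.cast hcast k) with hp
  have hpd : ∑ k : Fin (n₀ + 1), Measure.dirac (p k) = ∑ i, n i • Measure.dirac (q i) :=
    fin_sum_list n q Measure.dirac hcast
  set νm : Measure X := ((n₀ + 1 : ℝ≥0))⁻¹ • ∑ k : Fin (n₀ + 1), Measure.dirac (p k) with hνm
  have hNcoe : ((n₀ : ℝ≥0) + 1) = (N : ℝ≥0) := by exact_mod_cast congrArg (Nat.cast (R := ℝ≥0)) hn₀N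
  have hNne : ((N : ℝ≥0)) ≠ 0 := by
    simp only [ne_eq, Nat.cast_eq_zero]
    omega
  have hprob : IsProbabilityMeasure νm := by
    constructor
    rw [hνm, Measure.smul_apply, Measure.finset_sum_apply]
    simp only [Measure.dirac_apply_of_mem (Set.mem_univ _), Finset.sum_const,
      Finset.card_univ, Fintype.card_fin, smul_eq_mul, mul_one]
    rw [nsmul_eq_mul, mul_one, ENNReal.smul_def, smul_eq_mul]
    have hne2 : ((n₀ : ℝ≥0) + 1) ≠ 0 := by rw [hNcoe]; exact hNne
    rw [ENNReal.coe_inv hne2]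
    have hcoe3 : ((((n₀ : ℝ≥0) + 1) : ℝ≥0)  : ℝ≥0∞) = ((n₀ + 1 : ℕ) : ℝ≥0∞) := by
      push_cast
      ring
    rw [hcoe3]
    exact ENNReal.inv_mul_cancel (by exact_mod_cast Nat.succ_ne_zero n₀)
      (ENNReal.natCast_ne_top _)
  refine ⟨⟨νm, hprob⟩, ⟨n₀, p, fun k => ?_, rfl⟩, ?_⟩
  · -- support membership
    have hmem : p k ∈ L := L.get_mem _
    rw [hLdef] at hmem
    obtain ⟨i, _, hrep⟩ := List.mem_flatMap.1 hmem
    rw [List.eq_of_mem_replicate hrep]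
    exact hqsupp i
  · -- integral estimates
    intro f hf
    have hInt : Integrable f (μ : Measure X) := f.integrable _
    -- ν integral
    have hIν : ∫ x, f x ∂νm = ∑ i, ((n i : ℝ) / N) * f (q i) := by
      rw [hνm, integral_smul_nnreal_measure]
      rw [integral_finset_sum_measure (fun k _ => f.integrable _)]
      simp only [integral_dirac]
      have h2 : ∑ k : Fin (n₀ + 1), f (p k) = ∑ i, n i • f (q i) :=
        fin_sum_list n q (fun x => f x) hcast
      rw [h2]
      rw [NNReal.smul_def, smul_eq_mul]
      rw [hNcoe]
      push_cast
      rw [Finset.mul_sum]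
      refine Finset.sum_congr rfl fun i _ => ?_
      rw [nsmul_eq_mul]
      ring
    -- μ integral decomposition
    have hIμ : ∫ x, f x ∂(μ : Measure X) = ∑ i, ∫ x in A i, f x ∂(μ : Measure X) := by
      rw [← setIntegral_univ (μ := (μ : Measure X)) (f := fun x => f x), ← hAcover,
        integral_iUnion hmeasA hAd (hInt.integrableOn), tsum_fintype]
    have hterm : ∀ i, |∫ x in A i, f x ∂(μ : Measure X) - w i * f (q i)| ≤ (ε / 4) * w i := by
      intro i
      by_cases hz : (μ : Measure X) (A i) = 0
      · have hw_z : w i = 0 := by rw [hw]; simp [hz]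
        have : (μ : Measure X).restrict (A i) = 0 := Measure.restrict_eq_zero.2 hz
        rw [this, integral_zero_measure, hw_z]
        simp
      · have hqA : q i ∈ A i := hqmem i hz
        have hboundosc : ∀ x ∈ A i, ‖f x - f (q i)‖ ≤ ε / 4 := by
          intro x hx
          rw [Real.norm_eq_abs]
          exact hosc i f hf x hx (q i) hqA
        have hIs : IntegrableOn (fun x => f x) (A i) (μ : Measure X) := hInt.integrableOn
        have hconst : IntegrableOn (fun _ : X => f (q i)) (A i) (μ : Measure X) :=
          integrableOn_const (measure_ne_top _ _)
        have hsub : ∫ x in A i, (f x - f (q i)) ∂(μ : Measure X)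
            = (∫ x in A i, f x ∂(μ : Measure X)) - w i * f (q i) := by
          rw [integral_sub hIs hconst, setIntegral_const, smul_eq_mul, hw]
          rfl
        have := norm_setIntegral_le_of_norm_le_const (μ := (μ : Measure X)) (s := A i)
          (C := ε / 4) (measure_lt_top _ _) hboundosc
        rw [hsub, Real.norm_eq_abs] at this
        exact this.trans_eq (by rw [hw]; rfl)
    have hE1 : |∫ x, f x ∂(μ : Measure X) - ∑ i, w i * f (q i)| ≤ ε / 4 := by
      rw [hIμ, ← Finset.sum_sub_distrib]
      calc |∑ i, (∫ x in A i, f x ∂(μ : Measure X) - w i * f (q i))|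
          ≤ ∑ i, |∫ x in A i, f x ∂(μ : Measure X) - w i * f (q i)| :=
            Finset.abs_sum_le_sum_abs _ _
        _ ≤ ∑ i, (ε / 4) * w i := Finset.sum_le_sum fun i _ => hterm i
        _ = (ε / 4) * ∑ i, w i := by rw [Finset.mul_sum]
        _ = ε / 4 := by rw [hw1]; ring
    have hE2 : |∑ i, ((n i : ℝ) / N) * f (q i) - ∑ i, w i * f (q i)| ≤ B * (2 * m / N) := by
      rw [← Finset.sum_sub_distrib]
      calc |∑ i, (((n i : ℝ) / N) * f (q i) - w i * f (q i))|
          ≤ ∑ i, |((n i : ℝ) / N - w i) * f (q i)| := by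
            refine (Finset.abs_sum_le_sum_abs _ _).trans_eq ?_
            exact Finset.sum_congr rfl fun i _ => by rw [sub_mul]
        _ ≤ ∑ i, |(n i : ℝ) / N - w i| * B := by
            refine Finset.sum_le_sum fun i _ => ?_
            rw [abs_mul]
            refine mul_le_mul_of_nonneg_left ?_ (abs_nonneg _)
            exact (f.norm_coe_le_norm (q i)).trans (hB1 f hf)
        _ = (∑ i, |(n i : ℝ) / N - w i|) * B := by rw [Finset.sum_mul]
        _ ≤ (2 * m / N) * B := mul_le_mul_of_nonneg_right hnerr hBpos.le
        _ = B * (2 * m / N) := by ring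
    have : |∫ x, f x ∂νm - ∫ x, f x ∂(μ : Measure X)| ≤
        |∑ i, ((n i : ℝ) / N) * f (q i) - ∑ i, w i * f (q i)|
        + |∫ x, f x ∂(μ : Measure X) - ∑ i, w i * f (q i)| := by
      rw [hIν]
      calc |∑ i, ((n i : ℝ) / N) * f (q i) - ∫ x, f x ∂(μ : Measure X)|
          = |(∑ i, ((n i : ℝ) / N) * f (q i) - ∑ i, w i * f (q i))
            - (∫ x, f x ∂(μ : Measure X) - ∑ i, w i * f (q i))| := by
              rw [sub_sub_sub_cancel_right]
        _ ≤ _ := abs_sub _ _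
    calc |∫ x, f x ∂(((⟨νm, hprob⟩ : ProbabilityMeasure X)) : Measure X)
          - ∫ x, f x ∂(μ : Measure X)|
        = |∫ x, f x ∂νm - ∫ x, f x ∂(μ : Measure X)| := rfl
      _ ≤ _ := this
      _ < ε / 2 + ε / 2 := by
          refine add_lt_add_of_lt_of_le (lt_of_le_of_lt hE2 hNbound) ?_
          linarith
      _ = ε := by ring

end Helpers

/-- On a nonempty compact Hausdorff totally disconnected space, every regular Borel
probability measure is a weak-* limit of uniform averages of Dirac measures at points
of its support. -/
theorem measure_mem_closure_avg_diracs_of_support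
    {X : Type*} [TopologicalSpace X] [CompactSpace X] [T2Space X]
    [TotallyDisconnectedSpace X] [Nonempty X]
    [MeasurableSpace X] [BorelSpace X]
    (μ : ProbabilityMeasure X) (hreg : (μ : Measure X).Regular) :
    μ ∈ closure {ν : ProbabilityMeasure X |
      ∃ n : ℕ, ∃ p : Fin (n + 1) → X,
        (∀ i, p i ∈ measSupport (μ : Measure X)) ∧
        (ν : Measure X) = ((n + 1 : ℝ≥0))⁻¹ • ∑ i, Measure.dirac (p i)} := by
  classical
  set S := {ν : ProbabilityMeasure X |
      ∃ n : ℕ, ∃ p : Fin (n + 1) → X,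
        (∀ i, p i ∈ measSupport (μ : Measure X)) ∧
        (ν : Measure X) = ((n + 1 : ℝ≥0))⁻¹ • ∑ i, Measure.dirac (p i)} with hS
  have hch : ∀ i : Finset (X →ᵇ ℝ) × ℕ, ∃ ν : ProbabilityMeasure X, ν ∈ S ∧
      ∀ f ∈ i.1, |∫ x, f x ∂(ν : Measure X) - ∫ x, f x ∂(μ : Measure X)|
        < 1 / (i.2 + 1) := by
    intro i
    obtain ⟨ν, hν1, hν2⟩ := key_lemma μ i.1 (ε := 1 / (i.2 + 1)) (by positivity)
    exact ⟨ν, hν1, hν2⟩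
  choose η hηS hηc using hch
  haveI : Nonempty (Finset (X →ᵇ ℝ) × ℕ) := inferInstance
  haveI : (atTop : Filter (Finset (X →ᵇ ℝ) × ℕ)).NeBot := atTop_neBot
  have htend : Tendsto η atTop (𝓝 μ) := by
    rw [ProbabilityMeasure.tendsto_iff_forall_integral_tendsto]
    intro f
    rw [Metric.tendsto_nhds]
    intro ε hε
    obtain ⟨K, hK⟩ := exists_nat_one_div_lt hε
    filter_upwards [eventually_ge_atTop (({f}, K) : Finset (X →ᵇ ℝ) × ℕ)] with i hi
    have hf : f ∈ i.1 := hi.1 (Finset.mem_singleton_self f)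
    have hK2 : (1 : ℝ) / (i.2 + 1) ≤ 1 / (K + 1) := by
      apply one_div_le_one_div_of_le (by positivity)
      have h3 : (K : ℝ) ≤ i.2 := Nat.cast_le.2 hi.2
      linarith
    have := hηc i f hf
    rw [Real.dist_eq]
    calc |∫ x, f x ∂(η i : Measure X) - ∫ x, f x ∂(μ : Measure X)|
        < 1 / (i.2 + 1) := this
      _ ≤ 1 / (K + 1) := hK2
      _ < ε := hK
  exact mem_closure_of_tendsto htend (Eventually.of_forall hηS)
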